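/- Let c ≥ 0 and let ν be a (nonnegative Borel) measure on (0,1] with ∫_{(0,1]} y² ν(dy) < ∞ and ∫_{(0,1]} y ν(dy) < ∞. For f : ℝ → ℝ twice continuously differentiable on a neighborhood of [0,1], define Gf(x) = (c/2) x(1-x) f''(x) + ∫_{(0,1]} [ x (f(x+y(1-x)) - f(x)) + (1-x)(f(x(1-y)) - f(x)) ] ν(dy), define I⁰f(x) = c(1-x) f'(x) + ∫_{(0,1]} y [ f(x+y(1-x)) - f(x) ] ν(dy), and define I¹f(x) = (c/2) x(1-x) f''(x) + ∫_{(0,1]} (1-y) [ x (f(x+y(1-x)) - f(x)) + (1-x)(f(x(1-y)) - f(x)) ] ν(dy). Then, with H(x) = x, for every x ∈ (0,1], G(H·f)(x)/x = I⁰f(x) + I¹f(x). -/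

import Mathlib

open MeasureTheory Set

/-- The Generalized Fleming–Viot generator (two types, no mutation):
`Gg(x) = (c/2)x(1-x)g''(x) + ∫ [x(g(x+y(1-x))-g(x)) + (1-x)(g(x(1-y))-g(x))] ν(dy)`. -/
noncomputable def GFVgen (c : ℝ) (ν : Measure ℝ) (g : ℝ → ℝ) (x : ℝ) : ℝ :=
  c / 2 * (x * (1 - x)) * deriv (deriv g) x
    + ∫ y in Ioc (0 : ℝ) 1,
        (x * (g (x + y * (1 - x)) - g x) + (1 - x) * (g (x * (1 - y)) - g x)) ∂ν

/-- The immigration part `I⁰`. -/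
noncomputable def GFV_I0 (c : ℝ) (ν : Measure ℝ) (f : ℝ → ℝ) (x : ℝ) : ℝ :=
  c * (1 - x) * deriv f x
    + ∫ y in Ioc (0 : ℝ) 1, y * (f (x + y * (1 - x)) - f x) ∂ν

/-- The reproduction part `I¹`. -/
noncomputable def GFV_I1 (c : ℝ) (ν : Measure ℝ) (f : ℝ → ℝ) (x : ℝ) : ℝ :=
  c / 2 * (x * (1 - x)) * deriv (deriv f) x
    + ∫ y in Ioc (0 : ℝ) 1,
        (1 - y) *
          (x * (f (x + y * (1 - x)) - f x) + (1 - x) * (f (x * (1 - y)) - f x)) ∂ν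

set_option maxHeartbeats 1000000 in
/-- Decomposition of the generator of the Generalized Fleming–Viot process conditioned on
fixation of type 1: with `H(x) = x` (and `r₁ = 0`), one has
`G(H·f)(x)/x = I⁰f(x) + I¹f(x)` for every `x ∈ (0,1]`. -/
theorem gfv_fixation_generator_decomposition
    (c : ℝ) (hc : 0 ≤ c) (ν : Measure ℝ)
    (hν2 : IntegrableOn (fun y => y ^ 2) (Ioc (0 : ℝ) 1) ν)
    (hν1 : IntegrableOn (fun y => y) (Ioc (0 : ℝ) 1) ν)
    (f : ℝ → ℝ) (U : Set ℝ) (hU : IsOpen U) (hUI : Icc (0 : ℝ) 1 ⊆ U)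
    (hf : ContDiffOn ℝ 2 f U) :
    ∀ x ∈ Ioc (0 : ℝ) 1,
      GFVgen c ν (fun z => z * f z) x / x = GFV_I0 c ν f x + GFV_I1 c ν f x := by
  intro x hx
  obtain ⟨hx0, hx1⟩ := hx
  have hxI : x ∈ Icc (0 : ℝ) 1 := ⟨le_of_lt hx0, hx1⟩
  have hxU : x ∈ U := hUI hxI
  -- differentiability facts
  have hfd : DifferentiableOn ℝ f U := hf.differentiableOn two_ne_zero
  have hfd' : ∀ z ∈ U, DifferentiableAt ℝ f z := fun z hz =>
    (hfd z hz).differentiableAt (hU.mem_nhds hz)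
  have hcd : ContDiffOn ℝ 1 (deriv f) U := by
    have := hf.deriv_of_isOpen hU (m := 1) (by norm_num)
    simpa using this
  have hcd' : ∀ z ∈ U, DifferentiableAt ℝ (deriv f) z := fun z hz =>
    ((hcd.differentiableOn one_ne_zero) z hz).differentiableAt (hU.mem_nhds hz)
  -- bound on deriv f over [0,1]
  obtain ⟨L0, hL0⟩ := (isCompact_Icc (a := (0:ℝ)) (b := 1)).exists_bound_of_continuousOn
    ((hcd.continuousOn).mono hUI)
  set L : ℝ := max L0 0 with hLdef
  have hL : 0 ≤ L := le_max_right _ _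
  have hLb : ∀ z ∈ Icc (0:ℝ) 1, ‖deriv f z‖ ≤ L := fun z hz =>
    (hL0 z hz).trans (le_max_left _ _)
  have hLip : ∀ p ∈ Icc (0:ℝ) 1, ∀ q ∈ Icc (0:ℝ) 1, |f p - f q| ≤ L * |p - q| := by
    intro p hp q hq
    have := (convex_Icc (0:ℝ) 1).norm_image_sub_le_of_norm_deriv_le
      (fun z hz => hfd' z (hUI hz)) hLb hq hp
    simpa [Real.norm_eq_abs] using this
  -- membership of the jump destinations
  have ha_mem : ∀ y ∈ Ioc (0:ℝ) 1, x + y * (1 - x) ∈ Icc (0:ℝ) 1 := by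
    intro y hy
    constructor
    · nlinarith [hy.1.le, hy.2]
    · nlinarith [hy.1.le, hy.2]
  have hb_mem : ∀ y ∈ Ioc (0:ℝ) 1, x * (1 - y) ∈ Icc (0:ℝ) 1 := by
    intro y hy
    constructor
    · nlinarith [hy.1.le, hy.2]
    · nlinarith [hy.1.le, hy.2]
  -- the two integrands
  set T0 : ℝ → ℝ := fun y => y * (f (x + y * (1 - x)) - f x) with hT0
  set T1 : ℝ → ℝ := fun y =>
    (1 - y) * (x * (f (x + y * (1 - x)) - f x) + (1 - x) * (f (x * (1 - y)) - f x)) with hT1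
  -- measurability
  have hcont_a : ContinuousOn (fun y : ℝ => f (x + y * (1 - x))) (Ioc 0 1) := by
    apply hf.continuousOn.comp
      (Continuous.continuousOn (by continuity))
    intro y hy
    exact hUI (ha_mem y hy)
  have hcont_b : ContinuousOn (fun y : ℝ => f (x * (1 - y))) (Ioc 0 1) := by
    apply hf.continuousOn.comp
      (Continuous.continuousOn (by continuity))
    intro y hy
    exact hUI (hb_mem y hy)
  have hmeas0 : AEStronglyMeasurable T0 (ν.restrict (Ioc 0 1)) := by
    apply ContinuousOn.aestronglyMeasurable _ measurableSet_Ioc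
    exact continuousOn_id.mul (hcont_a.sub continuousOn_const)
  have hmeas1 : AEStronglyMeasurable T1 (ν.restrict (Ioc 0 1)) := by
    apply ContinuousOn.aestronglyMeasurable _ measurableSet_Ioc
    exact (continuousOn_const.sub continuousOn_id).mul
      ((continuousOn_const.mul (hcont_a.sub continuousOn_const)).add
        (continuousOn_const.mul (hcont_b.sub continuousOn_const)))
  -- integrability of T0
  have hint0 : IntegrableOn T0 (Ioc 0 1) ν := by
    refine (hν2.const_mul L).mono' hmeas0 ?_
    filter_upwards [ae_restrict_mem measurableSet_Ioc] with y hy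
    have hdf : |f (x + y * (1 - x)) - f x| ≤ L * |x + y * (1 - x) - x| :=
      hLip _ (ha_mem y hy) _ hxI
    have habs : |x + y * (1 - x) - x| = y * (1 - x) := by
      rw [show x + y * (1 - x) - x = y * (1 - x) by ring]
      exact abs_of_nonneg (by nlinarith [hy.1.le])
    rw [habs] at hdf
    have : ‖T0 y‖ = |y| * |f (x + y * (1 - x)) - f x| := by
      simp [hT0, abs_mul]
    rw [this, abs_of_pos hy.1]
    have h1 : y * |f (x + y * (1 - x)) - f x| ≤ y * (L * (y * (1 - x))) :=
      mul_le_mul_of_nonneg_left hdf hy.1.le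
    nlinarith [mul_nonneg (mul_nonneg hL (mul_nonneg hy.1.le hy.1.le)) hx0.le]
  -- integrability of T1
  have hint1 : IntegrableOn T1 (Ioc 0 1) ν := by
    refine (hν1.const_mul (2 * L)).mono' hmeas1 ?_
    filter_upwards [ae_restrict_mem measurableSet_Ioc] with y hy
    have hdfa : |f (x + y * (1 - x)) - f x| ≤ L * (y * (1 - x)) := by
      have hdf := hLip _ (ha_mem y hy) _ hxI
      rwa [show x + y * (1 - x) - x = y * (1 - x) by ring,
        abs_of_nonneg (by nlinarith [hy.1.le] : (0:ℝ) ≤ y * (1 - x))] at hdf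
    have hdfb : |f (x * (1 - y)) - f x| ≤ L * (x * y) := by
      have hdf := hLip _ (hb_mem y hy) _ hxI
      rwa [show x * (1 - y) - x = -(x * y) by ring, abs_neg,
        abs_of_nonneg (by nlinarith [hy.1.le] : (0:ℝ) ≤ x * y)] at hdf
    have h1 : ‖T1 y‖ ≤ |1 - y| *
        (x * |f (x + y * (1 - x)) - f x| + (1 - x) * |f (x * (1 - y)) - f x|) := by
      rw [show ‖T1 y‖ = |T1 y| from rfl, hT1, abs_mul]
      gcongr
      calc |x * (f (x + y * (1 - x)) - f x) + (1 - x) * (f (x * (1 - y)) - f x)|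
          ≤ |x * (f (x + y * (1 - x)) - f x)| + |(1 - x) * (f (x * (1 - y)) - f x)| :=
            abs_add_le _ _
        _ = x * |f (x + y * (1 - x)) - f x| + (1 - x) * |f (x * (1 - y)) - f x| := by
            rw [abs_mul, abs_mul, abs_of_pos hx0, abs_of_nonneg (by linarith : (0:ℝ) ≤ 1 - x)]
    have h2 : |1 - y| ≤ 1 := by
      rw [abs_of_nonneg (by linarith [hy.2] : (0:ℝ) ≤ 1 - y)]; linarith [hy.1]
    set A := |f (x + y * (1 - x)) - f x| with hA
    set B := |f (x * (1 - y)) - f x| with hB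
    have hAn : 0 ≤ A := abs_nonneg _
    have hBn : 0 ≤ B := abs_nonneg _
    have hbn : (0:ℝ) ≤ x * A + (1 - x) * B :=
      add_nonneg (mul_nonneg hx0.le hAn) (mul_nonneg (by linarith) hBn)
    have h3 : ‖T1 y‖ ≤ x * A + (1 - x) * B :=
      h1.trans (by nlinarith [mul_le_mul_of_nonneg_right h2 hbn])
    have h4 : x * A ≤ x * (L * (y * (1 - x))) := mul_le_mul_of_nonneg_left hdfa hx0.le
    have h5 : (1 - x) * B ≤ (1 - x) * (L * (x * y)) :=
      mul_le_mul_of_nonneg_left hdfb (by linarith)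
    have h6 : x * (L * (y * (1 - x))) ≤ L * y := by nlinarith [mul_nonneg hL hy.1.le]
    have h7 : (1 - x) * (L * (x * y)) ≤ L * y := by nlinarith [mul_nonneg hL hy.1.le]
    calc ‖T1 y‖ ≤ x * A + (1 - x) * B := h3
      _ ≤ 2 * L * y := by linarith
  -- second derivative of z * f z
  have hg1 : ∀ z ∈ U, deriv (fun z => z * f z) z = f z + z * deriv f z := by
    intro z hz
    have h := ((hasDerivAt_id z).mul (hfd' z hz).hasDerivAt).deriv
    simpa [Pi.mul_def] using h
  have hgg : deriv (deriv (fun z : ℝ => z * f z)) x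
      = 2 * deriv f x + x * deriv (deriv f) x := by
    have he : deriv (fun z : ℝ => z * f z) =ᶠ[nhds x] fun z => f z + z * deriv f z :=
      Filter.eventuallyEq_of_mem (hU.mem_nhds hxU) hg1
    rw [he.deriv_eq]
    have h1 : HasDerivAt (fun z : ℝ => f z + z * deriv f z)
        (deriv f x + (1 * deriv f x + x * deriv (deriv f) x)) x := by
      exact ((hfd' x hxU).hasDerivAt).add
        ((hasDerivAt_id x).mul ((hcd' x hxU).hasDerivAt))
    rw [h1.deriv]; ring
  -- main computation
  have key : GFVgen c ν (fun z => z * f z) x = x * (GFV_I0 c ν f x + GFV_I1 c ν f x) := by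
    unfold GFVgen GFV_I0 GFV_I1
    beta_reduce
    rw [hgg]
    have hIeq : (∫ y in Ioc (0:ℝ) 1,
        (x * ((x + y * (1 - x)) * f (x + y * (1 - x)) - x * f x)
          + (1 - x) * (x * (1 - y) * f (x * (1 - y)) - x * f x)) ∂ν)
        = ∫ y in Ioc (0:ℝ) 1, x * (T0 y + T1 y) ∂ν := by
      apply integral_congr_ae
      filter_upwards with y
      simp only [hT0, hT1]
      ring
    rw [hIeq, integral_const_mul, integral_add hint0 hint1]
    simp only [hT0, hT1]
    ring
  rw [key, mul_div_cancel_left₀ _ (ne_of_gt hx0)]
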